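/- arXiv:1709.04994 — 4 statements merged into one kernel-verified Lean document; each statement's English description precedes it below -/
import Mathlib

section
/- For λ in the upper half-plane, the function u defined by u(x) = e^{i√λ x} for x ≥ 0 and u(x) = ᾱ e^{√λ x} + α e^{-√λ x} for x < 0, where α = (1 - i)/2, is continuously differentiable on ℝ and satisfies -u''(x) = λ·sgn(x)·u(x) for all x ≠ 0. -/
open Complex

noncomputable def sqC (l : ℂ) : ℂ := l ^ (1/2 : ℂ)

noncomputable def alphaC : ℂ := (1 - Complex.I) / 2

lemma expDeriv (c : ℂ) (x : ℝ) :
    HasDerivAt (fun x : ℝ => Complex.exp (c * x)) (c * Complex.exp (c * x)) x := by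
  have h : HasDerivAt (fun x : ℝ => c * (x : ℂ)) c x := by
    simpa using (Complex.ofRealCLM.hasDerivAt (x := x)).const_mul c
  simpa [mul_comm] using h.cexp

/-- The function u (u(x) = e^{i√λ x} for x ≥ 0, u(x) = ᾱe^{√λ x} + αe^{-√λ x} for x < 0)
is continuously differentiable on ℝ and satisfies -u'' = λ·sgn·u away from 0. -/
theorem u_solves (l : ℂ) (hl : 0 < l.im) (u : ℝ → ℂ)
    (hu_pos : ∀ x : ℝ, 0 ≤ x → u x = Complex.exp (Complex.I * sqC l * x))
    (hu_neg : ∀ x : ℝ, x < 0 →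
      u x = (starRingEnd ℂ) alphaC * Complex.exp (sqC l * x)
        + alphaC * Complex.exp (-(sqC l) * x)) :
    ContDiff ℝ 1 u ∧
      ∀ x : ℝ, x ≠ 0 → -(deriv (deriv u) x) = l * (Real.sign x : ℂ) * u x := by
  set s : ℂ := sqC l with hs
  have hl0 : l ≠ 0 := by
    intro h; rw [h] at hl; simp at hl
  have hs2 : s * s = l := by
    rw [hs, sqC, ← Complex.cpow_add _ _ hl0]
    norm_num
  have halpha : (starRingEnd ℂ) alphaC = (1 + Complex.I) / 2 := by
    have : alphaC = 1 / 2 - Complex.I / 2 := by rw [alphaC]; ring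
    rw [this, map_sub, map_div₀, map_div₀, map_one, Complex.conj_I,
      Complex.conj_ofNat 2]
    ring
  -- the two smooth pieces
  set f : ℝ → ℂ := fun x => Complex.exp (Complex.I * s * x) with hf
  set g : ℝ → ℂ := fun x =>
    (starRingEnd ℂ) alphaC * Complex.exp (s * x)
      + alphaC * Complex.exp (-s * x) with hg
  -- candidate first derivative pieces
  set a : ℝ → ℂ := fun x => Complex.I * s * Complex.exp (Complex.I * s * x) with ha
  set b : ℝ → ℂ := fun x =>
    (starRingEnd ℂ) alphaC * (s * Complex.exp (s * x))
      + alphaC * (-s * Complex.exp (-s * x)) with hb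
  set v : ℝ → ℂ := fun x => if 0 ≤ x then a x else b x with hv
  have hab0 : a 0 = b 0 := by
    simp only [ha, hb, Complex.ofReal_zero, mul_zero, neg_zero, Complex.exp_zero, mul_one, halpha]
    simp only [alphaC]
    ring
  have hfDeriv : ∀ x : ℝ, HasDerivAt f (a x) x := by
    intro x
    simpa [hf, ha] using expDeriv (Complex.I * s) x
  have hgDeriv : ∀ x : ℝ, HasDerivAt g (b x) x := by
    intro x
    exact (((expDeriv s x).const_mul ((starRingEnd ℂ) alphaC)).add
      ((expDeriv (-s) x).const_mul alphaC))
  have haDeriv : ∀ x : ℝ, HasDerivAt a (Complex.I * s * a x) x := by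
    intro x
    simpa [ha, mul_assoc] using (expDeriv (Complex.I * s) x).const_mul (Complex.I * s)
  have hbDeriv : ∀ x : ℝ, HasDerivAt b (l * g x) x := by
    intro x
    have h1 := (((expDeriv s x).const_mul s).const_mul ((starRingEnd ℂ) alphaC)).add
      (((expDeriv (-s) x).const_mul (-s)).const_mul alphaC)
    refine h1.congr_deriv ?_
    simp only [hg, hb]
    rw [← hs2]; ring
  -- u agrees with g on Iic 0 (note g 0 = 1 = u 0)
  have hug : ∀ y : ℝ, y ≤ 0 → u y = g y := by
    intro y hy
    rcases lt_or_eq_of_le hy with hy' | hy'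
    · exact hu_neg y hy'
    · subst hy'
      rw [hu_pos 0 le_rfl]
      simp only [hg, halpha, Complex.ofReal_zero, mul_zero, neg_zero, Complex.exp_zero,
        mul_one]
      simp only [alphaC]
      ring
  -- u has derivative v everywhere
  have hHas : ∀ x : ℝ, HasDerivAt u (v x) x := by
    intro x
    rcases lt_trichotomy x 0 with hx | hx | hx
    · have heq : u =ᶠ[nhds x] g := by
        filter_upwards [Iio_mem_nhds hx] with y hy using hu_neg y hy
      have : v x = b x := by simp [hv, not_le.mpr hx]
      rw [this]
      exact (hgDeriv x).congr_of_eventuallyEq heq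
    · subst hx
      have hvi : v 0 = a 0 := by simp [hv]
      rw [hvi]
      have hR : HasDerivWithinAt u (a 0) (Set.Ici (0:ℝ)) 0 := by
        refine ((hfDeriv 0).hasDerivWithinAt).congr ?_ ?_
        · intro y hy; exact hu_pos y hy
        · exact hu_pos 0 le_rfl
      have hL : HasDerivWithinAt u (a 0) (Set.Iic (0:ℝ)) 0 := by
        rw [hab0]
        refine ((hgDeriv 0).hasDerivWithinAt).congr ?_ ?_
        · intro y hy; exact hug y hy
        · exact hug 0 le_rfl
      have := hL.union hR
      rw [Set.Iic_union_Ici] at this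
      exact this.hasDerivAt (by simp)
    · have heq : u =ᶠ[nhds x] f := by
        filter_upwards [Ioi_mem_nhds hx] with y hy using hu_pos y hy.le
      have : v x = a x := by simp [hv, hx.le]
      rw [this]
      exact (hfDeriv x).congr_of_eventuallyEq heq
  have hderiv : deriv u = v := funext fun x => (hHas x).deriv
  have hvCont : Continuous v := by
    refine Continuous.if_le ?_ ?_ continuous_const continuous_id ?_
    · exact continuous_const.mul (continuous_const.mul Complex.continuous_ofReal).cexp
    · exact (continuous_const.mul
          ((continuous_const.mul (continuous_const.mul Complex.continuous_ofReal).cexp))).add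
        (continuous_const.mul
          ((continuous_const.mul (continuous_const.mul Complex.continuous_ofReal).cexp)))
    · intro x hx
      subst hx
      exact hab0
  constructor
  · rw [contDiff_one_iff_deriv]
    exact ⟨fun x => (hHas x).differentiableAt, by rw [hderiv]; exact hvCont⟩
  · intro x hx
    rw [hderiv]
    rcases lt_or_gt_of_ne hx with hx' | hx'
    · have heq : v =ᶠ[nhds x] b := by
        filter_upwards [Iio_mem_nhds hx'] with y hy
        show (if 0 ≤ y then a y else b y) = b y
        exact if_neg (not_le.mpr (Set.mem_Iio.mp hy))
      rw [heq.deriv_eq, (hbDeriv x).deriv, hu_neg x hx', Real.sign_of_neg hx']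
      push_cast
      simp only [hg]
      ring
    · have heq : v =ᶠ[nhds x] a := by
        filter_upwards [Ioi_mem_nhds hx'] with y hy
        show (if 0 ≤ y then a y else b y) = a y
        exact if_pos (le_of_lt (Set.mem_Ioi.mp hy))
      rw [heq.deriv_eq, (haDeriv x).deriv, hu_pos x hx'.le, Real.sign_of_pos hx']
      push_cast
      simp only [ha]
      rw [← hs2]; ring_nf
      rw [Complex.I_sq]; ring
end

section
/- Let α = (1-i)/2. For λ in the upper half-plane and all x, y ∈ ℝ, the kernel K_λ(x,y) = C_λ(x,y) + D_λ(x,y) satisfies |K_λ(x,y)| ≤ 1/√|λ|, where C_λ and D_λ are the explicit piecewise exponential kernels (C_λ(x,y) = (2α√λ)^{-1} times α e^{i√λ(x+y)} if x,y ≥ 0; -e^{√λ(ix+y)} if x ≥ 0 > y; e^{√λ(x+iy)} if x < 0 ≤ y; -ᾱ e^{√λ(x+y)} if x,y < 0; and D_λ(x,y) = (2α√λ)^{-1} times ᾱ e^{i√λ|x-y|} if x,y ≥ 0; -α e^{-√λ|x-y|} if x,y < 0; 0 otherwise). -/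
open Complex

/-- The kernel C_λ. -/
noncomputable def Cker (l : ℂ) (x y : ℝ) : ℂ :=
  (1 / (2 * alphaC * sqC l)) *
    (if 0 ≤ x then
      (if 0 ≤ y then alphaC * Complex.exp (Complex.I * sqC l * (x + y))
       else -Complex.exp (sqC l * (Complex.I * x + y)))
     else
      (if 0 ≤ y then Complex.exp (sqC l * (x + Complex.I * y))
       else -(starRingEnd ℂ) alphaC * Complex.exp (sqC l * (x + y))))

/-- The kernel D_λ. -/
noncomputable def Dker (l : ℂ) (x y : ℝ) : ℂ :=
  (1 / (2 * alphaC * sqC l)) *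
    (if 0 ≤ x ∧ 0 ≤ y then
       (starRingEnd ℂ) alphaC * Complex.exp (Complex.I * sqC l * |x - y|)
     else if x < 0 ∧ y < 0 then
       -alphaC * Complex.exp (-(sqC l) * |x - y|)
     else 0)

lemma abs_alphaC : ‖alphaC‖ = Real.sqrt 2 / 2 := by
  rw [alphaC, norm_div, Complex.norm_two, Complex.norm_def]
  norm_num [Complex.normSq_apply]

lemma sqC_props (l : ℂ) (hl : 0 < l.im) :
    0 ≤ (sqC l).re ∧ 0 ≤ (sqC l).im ∧ ‖sqC l‖ = Real.sqrt ‖l‖ := by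
  have hl0 : l ≠ 0 := by
    intro h; rw [h] at hl; simp at hl
  have hlog : sqC l = Complex.exp (Complex.log l * (1/2)) :=
    Complex.cpow_def_of_ne_zero hl0 _
  have harg0 : 0 ≤ Complex.arg l := Complex.arg_nonneg_iff.mpr hl.le
  have hargpi : Complex.arg l ≤ Real.pi := Complex.arg_le_pi l
  have him : (Complex.log l * (1/2)).im = Complex.arg l / 2 := by
    simp [Complex.mul_im, Complex.log_im]; ring
  have hre : (Complex.log l * (1/2)).re = Real.log ‖l‖ / 2 := by
    simp [Complex.mul_re, Complex.log_re]; ring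
  refine ⟨?_, ?_, ?_⟩
  · rw [hlog, Complex.exp_re, him, hre]
    apply mul_nonneg (Real.exp_pos _).le
    apply Real.cos_nonneg_of_mem_Icc
    constructor <;> [nlinarith [Real.pi_pos]; nlinarith]
  · rw [hlog, Complex.exp_im, him, hre]
    apply mul_nonneg (Real.exp_pos _).le
    exact Real.sin_nonneg_of_nonneg_of_le_pi (by linarith) (by nlinarith [Real.pi_pos])
  · rw [hlog, Complex.norm_exp, hre, Real.sqrt_eq_rpow,
      Real.rpow_def_of_pos (norm_pos_iff.mpr hl0)]
    ring_nf

lemma abs_exp_le_one {z : ℂ} (h : z.re ≤ 0) : ‖Complex.exp z‖ ≤ 1 := by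
  rw [Complex.norm_exp]; exact Real.exp_le_one_iff.mpr h

/-- The kernel K_λ = C_λ + D_λ is bounded by |λ|^{-1/2}. -/
theorem kernel_bound (l : ℂ) (hl : 0 < l.im) (x y : ℝ) :
    ‖Cker l x y + Dker l x y‖ ≤ 1 / Real.sqrt ‖l‖ := by
  obtain ⟨hre, him, habs⟩ := sqC_props l hl
  have hl0 : l ≠ 0 := by intro h; rw [h] at hl; simp at hl
  have hL : 0 < Real.sqrt ‖l‖ := Real.sqrt_pos.mpr (norm_pos_iff.mpr hl0)
  have h2 : (0:ℝ) < Real.sqrt 2 := by positivity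
  set s := sqC l with hs
  have hpref : ‖1 / (2 * alphaC * s)‖ =
      1 / (Real.sqrt 2 * Real.sqrt ‖l‖) := by
    rw [norm_div, norm_one, norm_mul, norm_mul, Complex.norm_two, abs_alphaC, habs]
    ring_nf
  have key : ∀ A : ℂ, ‖A‖ ≤ Real.sqrt 2 →
      ‖(1 / (2 * alphaC * s)) * A‖ ≤ 1 / Real.sqrt ‖l‖ := by
    intro A hA
    rw [norm_mul, hpref]
    calc 1 / (Real.sqrt 2 * Real.sqrt ‖l‖) * ‖A‖
        ≤ 1 / (Real.sqrt 2 * Real.sqrt ‖l‖) * Real.sqrt 2 := by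
          apply mul_le_mul_of_nonneg_left hA; positivity
      _ = 1 / Real.sqrt ‖l‖ := by field_simp
  have halpha2 : Real.sqrt 2 / 2 + Real.sqrt 2 / 2 = Real.sqrt 2 := by ring
  rw [Cker, Dker, ← mul_add]
  rcases le_or_gt 0 x with hx | hx <;> rcases le_or_gt 0 y with hy | hy
  · simp only [if_pos hx, if_pos hy, if_pos (And.intro hx hy)]
    apply key
    calc ‖_‖ ≤ ‖alphaC * Complex.exp (Complex.I * s * (x + y))‖
        + ‖(starRingEnd ℂ) alphaC * Complex.exp (Complex.I * s * |x - y|)‖ :=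
          norm_add_le _ _
      _ ≤ Real.sqrt 2 / 2 * 1 + Real.sqrt 2 / 2 * 1 := by
          apply add_le_add <;> rw [norm_mul] <;>
            [rw [abs_alphaC]; rw [Complex.norm_conj, abs_alphaC]] <;>
          · apply mul_le_mul_of_nonneg_left _ (by positivity)
            apply abs_exp_le_one
            have := abs_nonneg (x - y)
            simp [Complex.mul_re, Complex.mul_im]
            nlinarith
      _ ≤ Real.sqrt 2 := by nlinarith
  · have h1 : ¬ (0 ≤ x ∧ 0 ≤ y) := by rintro ⟨_, h⟩; linarith
    have h2' : ¬ (x < 0 ∧ y < 0) := by rintro ⟨h, _⟩; linarith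
    simp only [if_pos hx, if_neg (not_le.mpr hy), if_neg h1, if_neg h2', add_zero]
    apply key
    rw [norm_neg]
    calc ‖Complex.exp (s * (Complex.I * x + y))‖ ≤ 1 := by
          apply abs_exp_le_one
          simp [Complex.mul_re, Complex.mul_im, Complex.add_re, Complex.add_im]
          nlinarith
      _ ≤ Real.sqrt 2 := by nlinarith [Real.sq_sqrt (by norm_num : (2:ℝ) ≥ 0)]
  · have h1 : ¬ (0 ≤ x ∧ 0 ≤ y) := by rintro ⟨h, _⟩; linarith
    have h2' : ¬ (x < 0 ∧ y < 0) := by rintro ⟨_, h⟩; linarith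
    simp only [if_neg (not_le.mpr hx), if_pos hy, if_neg h1, if_neg h2', add_zero]
    apply key
    calc ‖Complex.exp (s * (x + Complex.I * y))‖ ≤ 1 := by
          apply abs_exp_le_one
          simp [Complex.mul_re, Complex.mul_im, Complex.add_re, Complex.add_im]
          nlinarith
      _ ≤ Real.sqrt 2 := by nlinarith [Real.sq_sqrt (by norm_num : (2:ℝ) ≥ 0)]
  · have h1 : ¬ (0 ≤ x ∧ 0 ≤ y) := by rintro ⟨h, _⟩; linarith
    simp only [if_neg (not_le.mpr hx), if_neg (not_le.mpr hy), if_neg h1,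
      if_pos (And.intro hx hy)]
    apply key
    calc ‖_‖ ≤ ‖-(starRingEnd ℂ) alphaC * Complex.exp (s * (x + y))‖
        + ‖-alphaC * Complex.exp (-s * |x - y|)‖ := norm_add_le _ _
      _ ≤ Real.sqrt 2 / 2 * 1 + Real.sqrt 2 / 2 * 1 := by
          apply add_le_add <;> rw [norm_mul, norm_neg] <;>
            [rw [Complex.norm_conj, abs_alphaC]; rw [abs_alphaC]] <;>
          · apply mul_le_mul_of_nonneg_left _ (by positivity)
            apply abs_exp_le_one
            have := abs_nonneg (x - y)
            simp [Complex.mul_re, Complex.mul_im, Complex.add_re, Complex.add_im]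
            nlinarith
      _ ≤ Real.sqrt 2 := by nlinarith
end

section
/- Suppose f : ℝ → ℂ is in L¹ ∩ L^∞ with f, f' locally absolutely continuous, f satisfies sgn(x)(-f''(x) + q(x)f(x)) = λ f(x) a.e. with q ∈ L¹(ℝ) real and Im λ > 0, and f together with q f and f'' lie in L¹(ℝ). If f ≠ 0 then q f ≠ 0 in L¹(ℝ) and ‖q f‖_{L¹} ≤ |λ|^{-1/2} ‖q‖_{L¹} ‖q f‖_{L¹}; consequently |λ| ≤ ‖q‖_{L¹}². -/
open MeasureTheory Filter

/-- Birman-Schwinger step: if f is an eigenfunction (lying in L¹ ∩ L^∞, with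
qf, f'' ∈ L¹) of sgn(·)(-d²/dx² + q) for λ in the upper half-plane, and the
resolvent of B₀ = sgn(·)(-d²/dx²) at λ is given by an integral kernel K bounded
by |λ|^{-1/2}, then ‖qf‖₁ ≠ 0, ‖qf‖₁ ≤ |λ|^{-1/2}‖q‖₁‖qf‖₁ and |λ| ≤ ‖q‖₁². -/
theorem birman_schwinger_bound (q : ℝ → ℝ) (hq : Integrable q)
    (lam : ℂ) (hlam : 0 < lam.im)
    (K : ℝ → ℝ → ℂ)
    (hKbound : ∀ x y : ℝ, ‖K x y‖ ≤ 1 / Real.sqrt (‖lam‖))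
    (hres : ∀ g h : ℝ → ℂ, Integrable g → Integrable h →
      Differentiable ℝ h → Differentiable ℝ (deriv h) →
      Integrable (deriv (deriv h)) →
      (∀ᵐ x : ℝ, (Real.sign x : ℂ) * (-(deriv (deriv h) x)) - lam * h x = g x) →
      ∀ x : ℝ, h x = ∫ y : ℝ, K x y * g y)
    (f : ℝ → ℂ) (hf_ne : ∃ x, f x ≠ 0)
    (hf_L1 : Integrable f) (hf_bdd : ∃ M : ℝ, ∀ x, ‖f x‖ ≤ M)
    (hf_diff : Differentiable ℝ f) (hf'_diff : Differentiable ℝ (deriv f))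
    (hqf_L1 : Integrable (fun x => (q x : ℂ) * f x))
    (hf''_L1 : Integrable (deriv (deriv f)))
    (heig : ∀ᵐ x : ℝ,
      (Real.sign x : ℂ) * (-(deriv (deriv f) x) + (q x : ℂ) * f x) = lam * f x) :
    (∫ x : ℝ, ‖(q x : ℂ) * f x‖) ≠ 0 ∧
    (∫ x : ℝ, ‖(q x : ℂ) * f x‖) ≤
      (1 / Real.sqrt (‖lam‖)) * (∫ x : ℝ, |q x|) *
        (∫ x : ℝ, ‖(q x : ℂ) * f x‖) ∧
    ‖lam‖ ≤ (∫ x : ℝ, |q x|) ^ 2 := by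
  classical
  set Q : ℝ := ∫ x : ℝ, |q x| with hQ_def
  set N : ℝ := ∫ x : ℝ, ‖(q x : ℂ) * f x‖ with hN_def
  set c : ℝ := 1 / Real.sqrt (‖lam‖) with hc_def
  have hlam_ne : lam ≠ 0 := by
    intro h; rw [h] at hlam; simp at hlam
  have habs_pos : 0 < ‖lam‖ := norm_pos_iff.mpr hlam_ne
  have hsqrt_pos : 0 < Real.sqrt (‖lam‖) := Real.sqrt_pos.mpr habs_pos
  have hc_pos : 0 < c := by rw [hc_def]; positivity
  set g : ℝ → ℂ := fun x => -((Real.sign x : ℂ) * ((q x : ℂ) * f x)) with hg_def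
  have hsign_bd : ∀ x : ℝ, ‖(Real.sign x : ℂ)‖ ≤ 1 := by
    intro x
    rw [Complex.norm_real, Real.norm_eq_abs]
    rcases Real.sign_apply_eq x with h | h | h <;> simp [h]
  have hg_bound : ∀ x, ‖g x‖ ≤ ‖(q x : ℂ) * f x‖ := by
    intro x
    have h1 : ‖g x‖ = ‖(Real.sign x : ℂ)‖ * ‖(q x : ℂ) * f x‖ := by
      rw [hg_def]; simp only [norm_neg, norm_mul]
    rw [h1]
    nlinarith [hsign_bd x, norm_nonneg ((q x : ℂ) * f x)]
  have hsign_meas_real : Measurable Real.sign := by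
    have h : Real.sign = fun r : ℝ => if r < 0 then (-1 : ℝ) else if 0 < r then 1 else 0 :=
      rfl
    rw [h]
    exact Measurable.ite (measurableSet_lt measurable_id measurable_const) measurable_const
      (Measurable.ite (measurableSet_lt measurable_const measurable_id) measurable_const
        measurable_const)
  have hsign_meas : Measurable fun x : ℝ => (Real.sign x : ℂ) :=
    Complex.measurable_ofReal.comp hsign_meas_real
  have hg_L1 : Integrable g := by
    refine (hqf_L1.bdd_mul (c := 1) hsign_meas.aestronglyMeasurable ?_).neg
    exact Filter.Eventually.of_forall hsign_bd
  have heq : ∀ᵐ x : ℝ, (Real.sign x : ℂ) * (-(deriv (deriv f) x)) - lam * f x = g x := by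
    filter_upwards [heig] with x hx
    simp only [hg_def]
    linear_combination hx
  have hrep : ∀ x : ℝ, f x = ∫ y : ℝ, K x y * g y :=
    hres g f hg_L1 hf_L1 hf_diff hf'_diff hf''_L1 heq
  have hN_nonneg : 0 ≤ N := integral_nonneg fun x => norm_nonneg _
  have hN_ne : N ≠ 0 := by
    intro hN0
    have hae : ∀ᵐ x : ℝ, ‖(q x : ℂ) * f x‖ = 0 :=
      (integral_eq_zero_iff_of_nonneg (fun x => norm_nonneg ((q x : ℂ) * f x))
        hqf_L1.norm).mp hN0
    obtain ⟨x, hx⟩ := hf_ne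
    have hgae' : ∀ᵐ y : ℝ, K x y * g y = 0 := by
      filter_upwards [hae] with y hy
      have hg0 : g y = 0 := by
        have h2 := hg_bound y
        rw [hy] at h2
        exact norm_le_zero_iff.mp h2
      rw [hg0, mul_zero]
    have : f x = 0 := by
      rw [hrep x, integral_congr_ae hgae', integral_zero]
    exact hx this
  have hf_bd : ∀ x : ℝ, ‖f x‖ ≤ c * N := by
    intro x
    rw [hrep x]
    have step1 : ‖∫ y : ℝ, K x y * g y‖ ≤ ∫ y : ℝ, ‖K x y * g y‖ :=
      norm_integral_le_integral_norm _
    have step2 : (∫ y : ℝ, ‖K x y * g y‖) ≤ ∫ y : ℝ, c * ‖(q y : ℂ) * f y‖ := by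
      refine integral_mono_of_nonneg (Filter.Eventually.of_forall fun y => norm_nonneg _)
        (hqf_L1.norm.const_mul c) (Filter.Eventually.of_forall fun y => ?_)
      show ‖K x y * g y‖ ≤ c * ‖(q y : ℂ) * f y‖
      rw [norm_mul]
      have hK : ‖K x y‖ ≤ c := by
        rw [hc_def]; exact hKbound x y
      exact mul_le_mul hK (hg_bound y) (norm_nonneg _) (le_of_lt hc_pos)
    have step3 : (∫ y : ℝ, c * ‖(q y : ℂ) * f y‖) = c * N := by
      rw [integral_const_mul]
    linarith
  have hmain : N ≤ c * Q * N := by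
    have h1 : N ≤ ∫ x : ℝ, |q x| * (c * N) := by
      refine integral_mono hqf_L1.norm (hq.abs.mul_const _) fun x => ?_
      show ‖(q x : ℂ) * f x‖ ≤ |q x| * (c * N)
      rw [norm_mul, Complex.norm_real, Real.norm_eq_abs]
      exact mul_le_mul_of_nonneg_left (hf_bd x) (abs_nonneg _)
    have h2 : (∫ x : ℝ, |q x| * (c * N)) = c * Q * N := by
      rw [integral_mul_const]; ring
    linarith
  refine ⟨hN_ne, hmain, ?_⟩
  have hN_pos : 0 < N := lt_of_le_of_ne hN_nonneg (Ne.symm hN_ne)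
  have h1 : 1 ≤ c * Q := by
    by_contra h
    push_neg at h
    nlinarith
  have hsqQ : Real.sqrt (‖lam‖) ≤ Q := by
    have h2 := mul_le_mul_of_nonneg_left h1 (le_of_lt hsqrt_pos)
    rw [mul_one, hc_def] at h2
    calc Real.sqrt (‖lam‖)
        ≤ Real.sqrt (‖lam‖) * (1 / Real.sqrt (‖lam‖) * Q) := h2
      _ = Q := by field_simp
  calc ‖lam‖ = Real.sqrt (‖lam‖) ^ 2 :=
        (Real.sq_sqrt (le_of_lt habs_pos)).symm
    _ ≤ Q ^ 2 := by nlinarith [Real.sqrt_nonneg (‖lam‖)]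
end

section
/- Let f : ℝ → ℂ with f, f' locally absolutely continuous, f ∈ L²(ℝ), f and f' vanishing at ±∞, and sgn(t)(-f''(t) + q(t)f(t)) = λ f(t), where q ∈ L¹(ℝ) is real and Im λ ≠ 0. Define U(x) = ∫_x^∞ sgn(t)|f(t)|² dt and V(x) = ∫_x^∞ (|f'(t)|² + q(t)|f(t)|²) dt. Then λ U(x) = f'(x) conj(f(x)) + V(x) for all x ∈ ℝ. -/
open MeasureTheory Filter Topology

lemma sign_measurable : Measurable Real.sign := by
  have h : Real.sign = fun r : ℝ => if r < 0 then (-1 : ℝ) else if 0 < r then 1 else 0 := by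
    funext r; rfl
  rw [h]
  exact Measurable.ite measurableSet_Iio measurable_const
    (Measurable.ite measurableSet_Ioi measurable_const measurable_const)

lemma abs_sign_le (t : ℝ) : |Real.sign t| ≤ 1 := by
  rcases Real.sign_apply_eq t with h | h | h <;> rw [h] <;> norm_num

lemma real_sign_mul_self {t : ℝ} (ht : t ≠ 0) : Real.sign t * Real.sign t = 1 := by
  rcases Real.sign_apply_eq_of_ne_zero t ht with h | h <;> rw [h] <;> norm_num

/-- For an eigenfunction f of sgn(·)(-d²/dx² + q) with non-real eigenvalue λ,
vanishing together with f' at ±∞, the identity λU(x) = f'(x)·conj(f(x)) + V(x)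
holds for all x, where U(x) = ∫_x^∞ sgn|f|² and V(x) = ∫_x^∞ (|f'|² + q|f|²). -/
theorem lambda_U_eq (q : ℝ → ℝ) (hq : Integrable q)
    (lam : ℂ) (hlam : lam.im ≠ 0) (f : ℝ → ℂ)
    (hf_diff : Differentiable ℝ f) (hf'_diff : Differentiable ℝ (deriv f))
    (hf_L2 : MemLp f 2) (hf'_L2 : MemLp (deriv f) 2)
    (hqf2 : Integrable (fun t => q t * ‖f t‖ ^ 2))
    (hf_top : Tendsto f atTop (𝓝 0)) (hf_bot : Tendsto f atBot (𝓝 0))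
    (hf'_top : Tendsto (deriv f) atTop (𝓝 0))
    (hf'_bot : Tendsto (deriv f) atBot (𝓝 0))
    (heig : ∀ᵐ t : ℝ,
      (Real.sign t : ℂ) * (-(deriv (deriv f) t) + (q t : ℂ) * f t) = lam * f t) :
    ∀ x : ℝ,
      lam * ((∫ t in Set.Ioi x, Real.sign t * ‖f t‖ ^ 2 : ℝ) : ℂ) =
        deriv f x * (starRingEnd ℂ) (f x) +
          ((∫ t in Set.Ioi x, (‖deriv f t‖ ^ 2 + q t * ‖f t‖ ^ 2) : ℝ) : ℂ) := by
  intro x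
  -- integrability of ‖f‖² and ‖f'‖²
  have hf2 : Integrable (fun t => ‖f t‖ ^ 2) := by
    have := hf_L2.integrable_norm_rpow (by norm_num) (by norm_num)
    simpa [Real.rpow_natCast] using this
  have hf'2 : Integrable (fun t => ‖deriv f t‖ ^ 2) := by
    have := hf'_L2.integrable_norm_rpow (by norm_num) (by norm_num)
    simpa [Real.rpow_natCast] using this
  -- integrability of sgn·‖f‖²
  have hsgnf2 : Integrable (fun t => Real.sign t * ‖f t‖ ^ 2) := by
    refine hf2.mono' ?_ ?_
    · exact ((sign_measurable.mul
        ((hf_diff.continuous.norm.pow 2).measurable)).aestronglyMeasurable)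
    · filter_upwards with t
      rw [Real.norm_eq_abs, abs_mul, abs_pow, abs_norm]
      calc |Real.sign t| * ‖f t‖ ^ 2 ≤ 1 * ‖f t‖ ^ 2 := by
            gcongr; exact abs_sign_le t
        _ = ‖f t‖ ^ 2 := one_mul _
  have hne : ∀ᵐ t : ℝ, t ≠ 0 := by
    rw [ae_iff]
    have : {t : ℝ | ¬ t ≠ 0} = {0} := by ext t; simp
    rw [this]; exact measure_singleton 0
  -- key pointwise a.e. identity
  have key : ∀ᵐ t : ℝ,
      -(deriv (deriv f) t) * (starRingEnd ℂ) (f t) + ((q t * ‖f t‖ ^ 2 : ℝ) : ℂ)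
        = lam * ((Real.sign t * ‖f t‖ ^ 2 : ℝ) : ℂ) := by
    filter_upwards [heig, hne] with t ht ht0
    have hs : (Real.sign t : ℂ) * (Real.sign t : ℂ) = 1 := by
      rw [← Complex.ofReal_mul, real_sign_mul_self ht0, Complex.ofReal_one]
    have h1 : -(deriv (deriv f) t) + (q t : ℂ) * f t
        = lam * (Real.sign t : ℂ) * f t := by
      have := congrArg (fun z => (Real.sign t : ℂ) * z) ht
      simp only [← mul_assoc, hs, one_mul] at this
      rw [this]; ring
    have h2 := congrArg (fun z => z * (starRingEnd ℂ) (f t)) h1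
    simp only [add_mul, neg_mul] at h2
    have hmc : f t * (starRingEnd ℂ) (f t) = ((‖f t‖ ^ 2 : ℝ) : ℂ) := by
      rw [Complex.mul_conj, Complex.normSq_eq_norm_sq]
    calc -(deriv (deriv f) t) * (starRingEnd ℂ) (f t) + ((q t * ‖f t‖ ^ 2 : ℝ) : ℂ)
        = -(deriv (deriv f) t * (starRingEnd ℂ) (f t))
            + (q t : ℂ) * (f t * (starRingEnd ℂ) (f t)) := by
          rw [hmc]; push_cast; ring
      _ = lam * (Real.sign t : ℂ) * f t * (starRingEnd ℂ) (f t) := by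
          rw [← h2]; ring
      _ = lam * ((Real.sign t * ‖f t‖ ^ 2 : ℝ) : ℂ) := by
          rw [mul_assoc, mul_assoc, hmc]; push_cast; ring
  -- integrability of f''·conj f on Ioi x
  have hkey_restrict : ∀ᵐ t ∂(volume.restrict (Set.Ioi x)),
      -(deriv (deriv f) t) * (starRingEnd ℂ) (f t) + ((q t * ‖f t‖ ^ 2 : ℝ) : ℂ)
        = lam * ((Real.sign t * ‖f t‖ ^ 2 : ℝ) : ℂ) := ae_restrict_of_ae key
  have hInt1 : IntegrableOn
      (fun t => lam * ((Real.sign t * ‖f t‖ ^ 2 : ℝ) : ℂ)) (Set.Ioi x) :=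
    ((hsgnf2.ofReal.const_mul lam).restrict)
  have hInt2 : IntegrableOn (fun t => ((q t * ‖f t‖ ^ 2 : ℝ) : ℂ)) (Set.Ioi x) :=
    hqf2.ofReal.restrict
  have hIntff : IntegrableOn
      (fun t => -(deriv (deriv f) t) * (starRingEnd ℂ) (f t)) (Set.Ioi x) := by
    have : IntegrableOn
        (fun t => lam * ((Real.sign t * ‖f t‖ ^ 2 : ℝ) : ℂ)
          - ((q t * ‖f t‖ ^ 2 : ℝ) : ℂ)) (Set.Ioi x) := hInt1.sub hInt2
    refine this.congr ?_
    filter_upwards [hkey_restrict] with t ht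
    rw [← ht]; ring
  -- integrability of f'·conj f'
  have hIntf'f' : IntegrableOn
      (fun t => deriv f t * (starRingEnd ℂ) (deriv f t)) (Set.Ioi x) := by
    have : (fun t => deriv f t * (starRingEnd ℂ) (deriv f t))
        = fun t => ((‖deriv f t‖ ^ 2 : ℝ) : ℂ) := by
      funext t
      rw [Complex.mul_conj, Complex.normSq_eq_norm_sq]
    rw [this]; exact hf'2.ofReal.restrict
  -- integration by parts on (x, ∞)
  have hderiv : ∀ t ∈ Set.Ici x, HasDerivAt (fun t => deriv f t * (starRingEnd ℂ) (f t))
      (deriv (deriv f) t * (starRingEnd ℂ) (f t)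
        + deriv f t * (starRingEnd ℂ) (deriv f t)) t := by
    intro t _
    have h1 : HasDerivAt (deriv f) (deriv (deriv f) t) t := (hf'_diff t).hasDerivAt
    have h2 : HasDerivAt (fun t => (starRingEnd ℂ) (f t))
        ((starRingEnd ℂ) (deriv f t)) t := (hf_diff t).hasDerivAt.star
    exact h1.mul h2
  have htend : Tendsto (fun t => deriv f t * (starRingEnd ℂ) (f t)) atTop (𝓝 0) := by
    have := hf'_top.mul hf_top.star
    simpa using this
  have hIBPint : IntegrableOn
      (fun t => deriv (deriv f) t * (starRingEnd ℂ) (f t)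
        + deriv f t * (starRingEnd ℂ) (deriv f t)) (Set.Ioi x) := by
    have h1 : IntegrableOn
        (fun t => deriv (deriv f) t * (starRingEnd ℂ) (f t)) (Set.Ioi x) := by
      have := hIntff.neg
      refine this.congr ?_
      filter_upwards with t; simp
    exact h1.add hIntf'f'
  have hIBP : ∫ t in Set.Ioi x,
      (deriv (deriv f) t * (starRingEnd ℂ) (f t)
        + deriv f t * (starRingEnd ℂ) (deriv f t))
      = 0 - deriv f x * (starRingEnd ℂ) (f x) :=
    integral_Ioi_of_hasDerivAt_of_tendsto' hderiv hIBPint htend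
  have h1 : IntegrableOn
      (fun t => deriv (deriv f) t * (starRingEnd ℂ) (f t)) (Set.Ioi x) := by
    have := hIntff.neg
    refine this.congr ?_
    filter_upwards with t; simp
  rw [integral_add h1 hIntf'f'] at hIBP
  -- now the main computation
  have step1 : lam * ((∫ t in Set.Ioi x, Real.sign t * ‖f t‖ ^ 2 : ℝ) : ℂ)
      = ∫ t in Set.Ioi x, lam * ((Real.sign t * ‖f t‖ ^ 2 : ℝ) : ℂ) := by
    rw [integral_const_mul]
    exact congrArg (fun z => lam * z) integral_ofReal.symm
  have step2 : (∫ t in Set.Ioi x, lam * ((Real.sign t * ‖f t‖ ^ 2 : ℝ) : ℂ))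
      = ∫ t in Set.Ioi x,
          (-(deriv (deriv f) t) * (starRingEnd ℂ) (f t) + ((q t * ‖f t‖ ^ 2 : ℝ) : ℂ)) := by
    refine integral_congr_ae ?_
    filter_upwards [hkey_restrict] with t ht
    rw [ht]
  have step3 : (∫ t in Set.Ioi x,
        (-(deriv (deriv f) t) * (starRingEnd ℂ) (f t) + ((q t * ‖f t‖ ^ 2 : ℝ) : ℂ)))
      = (∫ t in Set.Ioi x, -(deriv (deriv f) t) * (starRingEnd ℂ) (f t))
        + ∫ t in Set.Ioi x, ((q t * ‖f t‖ ^ 2 : ℝ) : ℂ) :=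
    integral_add hIntff hInt2
  have step4 : (∫ t in Set.Ioi x, -(deriv (deriv f) t) * (starRingEnd ℂ) (f t))
      = -(∫ t in Set.Ioi x, deriv (deriv f) t * (starRingEnd ℂ) (f t)) := by
    rw [← integral_neg]
    refine integral_congr_ae ?_
    filter_upwards with t; ring
  -- real integral split
  have hrsplit : (∫ t in Set.Ioi x, (‖deriv f t‖ ^ 2 + q t * ‖f t‖ ^ 2) : ℝ)
      = (∫ t in Set.Ioi x, ‖deriv f t‖ ^ 2 : ℝ)
        + ∫ t in Set.Ioi x, q t * ‖f t‖ ^ 2 :=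
    integral_add hf'2.restrict hqf2.restrict
  have hf'cast : (∫ t in Set.Ioi x, deriv f t * (starRingEnd ℂ) (deriv f t))
      = ((∫ t in Set.Ioi x, ‖deriv f t‖ ^ 2 : ℝ) : ℂ) := by
    have h : (∫ t in Set.Ioi x, deriv f t * (starRingEnd ℂ) (deriv f t))
        = ∫ t in Set.Ioi x, ((‖deriv f t‖ ^ 2 : ℝ) : ℂ) := by
      refine integral_congr_ae ?_
      filter_upwards with t
      rw [Complex.mul_conj, Complex.normSq_eq_norm_sq]
    rw [h]; exact integral_ofReal
  rw [step1, step2, step3, step4, hrsplit]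
  have hIBP' : (∫ t in Set.Ioi x, deriv (deriv f) t * (starRingEnd ℂ) (f t))
      = - (deriv f x * (starRingEnd ℂ) (f x))
        - ∫ t in Set.Ioi x, deriv f t * (starRingEnd ℂ) (deriv f t) := by
    rw [zero_sub] at hIBP
    linear_combination hIBP
  have hqcast : (∫ t in Set.Ioi x, ((q t * ‖f t‖ ^ 2 : ℝ) : ℂ))
      = ((∫ t in Set.Ioi x, q t * ‖f t‖ ^ 2 : ℝ) : ℂ) := integral_ofReal
  rw [hIBP', hf'cast, hqcast]
  push_cast
  ring
end
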